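/- Let G = (V,E) be a directed graph and T a tree decomposition of G rooted at some bag. For every pair of nodes u, v ∈ V and every path P : u ⇝ v in G, the path P contains a node that belongs to the bag which is the lowest common ancestor in T of the root bag B_u of u and the root bag B_v of v. -/

import Mathlib

open SimpleGraph

/-- `EPath E u v l` : `l` is the list of nodes (in order, including both endpoints) of a
path from `u` to `v` in the directed graph with edge relation `E`. -/
inductive EPath {V : Type} (E : V → V → Prop) : V → V → List V → Prop
  | refl (u : V) : EPath E u u [u]
  | step {u v w : V} {l : List V} : E u v → EPath E v w l → EPath E u w (u :: l)

/-- In a tree `T` rooted at `r`, the bag `a` is an ancestor of the bag `b` if `a` lies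
on the (unique) path from `b` to the root `r`; equivalently (in a tree), `a` lies on
every walk from `b` to `r`. -/
def IsAncestor {ι : Type} (T : SimpleGraph ι) (r a b : ι) : Prop :=
  ∀ w : T.Walk b r, a ∈ w.support



section Aux
variable {ι : Type} {T : SimpleGraph ι}

/-- Hom from induced subgraph into ambient graph. -/
def inclHom (T : SimpleGraph ι) (S : Set ι) : T.induce S →g T := ⟨Subtype.val, fun h => h⟩

lemma walk_avoiding_of_connected {S : Set ι} (hS : (T.induce S).Connected)
    {L : ι} (hL : L ∉ S) {a b : ι} (ha : a ∈ S) (hb : b ∈ S) :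
    ∃ w : T.Walk a b, L ∉ w.support := by
  obtain ⟨p⟩ := hS ⟨a, ha⟩ ⟨b, hb⟩
  refine ⟨p.map (inclHom T S), ?_⟩
  show L ∉ (p.map (inclHom T S)).support
  rw [SimpleGraph.Walk.support_map]
  intro h
  obtain ⟨x, _, hx⟩ := List.mem_map.mp h
  exact hL (hx ▸ x.2)

lemma EPath.start_mem {V : Type} {E : V → V → Prop} {u v : V} {l : List V}
    (h : EPath E u v l) : u ∈ l := by
  cases h <;> simp

/-- chain of bags along an EPath, avoiding L -/
lemma chain_walk {V : Type} {E : V → V → Prop} (bags : ι → Set V)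
    (hC2 : ∀ x y : V, E x y → ∃ b : ι, x ∈ bags b ∧ y ∈ bags b)
    (hC3 : ∀ x : V, (T.induce {b : ι | x ∈ bags b}).Connected)
    (L : ι) : ∀ {u v : V} {l : List V}, EPath E u v l → (∀ z ∈ l, z ∉ bags L) →
    ∀ b1 b2 : ι, u ∈ bags b1 → v ∈ bags b2 → ∃ w : T.Walk b1 b2, L ∉ w.support := by
  intro u v l hP
  induction hP with
  | refl u =>
    intro hl b1 b2 h1 h2
    exact walk_avoiding_of_connected (hC3 u) (hl u (by simp)) h1 h2
  | @step u v' w l' he hrest ih =>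
    intro hl b1 b2 h1 h2
    obtain ⟨b, hub, hvb⟩ := hC2 _ _ he
    obtain ⟨w1, hw1⟩ := walk_avoiding_of_connected (hC3 u) (hl u (by simp)) h1 hub
    obtain ⟨w2, hw2⟩ := ih (fun z hz => hl z (List.mem_cons_of_mem _ hz)) b b2 hvb h2
    refine ⟨w1.append w2, ?_⟩
    rw [Walk.mem_support_append_iff]
    rintro (h | h) <;> [exact hw1 h; exact hw2 h]

lemma ancestor_of_mem_path (hT : T.IsTree) {r b c : ι} {p : T.Walk b r}
    (hp : p.IsPath) (hc : c ∈ p.support) : IsAncestor T r c b := by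
  classical
  intro w
  have huniq := (hT.existsUnique_path b r).unique hp w.toPath.2
  exact w.support_toPath_subset (huniq ▸ hc)

end Aux

theorem treeDecomposition_lca {V ι : Type} (E : V → V → Prop)
    (T : SimpleGraph ι) (hT : T.IsTree) (bags : ι → Set V)
    (hC1 : ∀ x : V, ∃ b : ι, x ∈ bags b)
    (hC2 : ∀ x y : V, E x y → ∃ b : ι, x ∈ bags b ∧ y ∈ bags b)
    (hC3 : ∀ x : V, (T.induce {b : ι | x ∈ bags b}).Connected)
    (r : ι) {u v : V} (Bu Bv L : ι)
    (hBu : u ∈ bags Bu) (hBuMin : ∀ b : ι, u ∈ bags b → T.dist Bu r ≤ T.dist b r)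
    (hBv : v ∈ bags Bv) (hBvMin : ∀ b : ι, v ∈ bags b → T.dist Bv r ≤ T.dist b r)
    (hLu : IsAncestor T r L Bu) (hLv : IsAncestor T r L Bv)
    (hLMax : ∀ L' : ι, IsAncestor T r L' Bu → IsAncestor T r L' Bv →
      T.dist L' r ≤ T.dist L r)
    {l : List V} (hP : EPath E u v l) :
    ∃ z ∈ l, z ∈ bags L := by
  classical
  by_contra hcon
  push_neg at hcon
  -- a walk from Bu to Bv avoiding L
  obtain ⟨w, hw⟩ := chain_walk bags hC2 hC3 L hP hcon Bu Bv hBu hBv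
  have hBuL : Bu ≠ L := fun h => hw (h ▸ w.start_mem_support)
  have hBvL : Bv ≠ L := fun h => hw (h ▸ w.end_mem_support)
  -- unique paths from Bu, Bv to r
  obtain ⟨Pu, hPu, _⟩ := hT.existsUnique_path Bu r
  obtain ⟨Pv, hPv, _⟩ := hT.existsUnique_path Bv r
  have hLPu : L ∈ Pu.support := hLu Pu
  have hLPv : L ∈ Pv.support := hLv Pv
  -- neighbor of L toward Bu
  have extract : ∀ (B : ι) (P : T.Walk B r), B ≠ L → (hLP : L ∈ P.support) →
      ∃ (c : ι) (hadj : T.Adj L c) (p' : T.Walk c B),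
        L ∉ p'.support ∧ c ∈ P.support := by
    intro B P hBL hLP
    classical
    set q := P.takeUntil L hLP with hq
    have hcount : q.support.count L = 1 := P.count_support_takeUntil_eq_one hLP
    obtain ⟨c, hadj, p', heq⟩ := Walk.exists_eq_cons_of_ne (Ne.symm hBL) q.reverse
    have hsup : q.reverse.support = L :: p'.support := by rw [heq, Walk.support_cons]
    have hcount' : (L :: p'.support).count L = 1 := by
      rw [← hsup, Walk.support_reverse, List.count_reverse, hcount]
    have hLp' : L ∉ p'.support := by
      rw [List.count_cons_self] at hcount'
      intro h
      have := List.count_pos_iff.mpr h  -- 0 < count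
      omega
    refine ⟨c, hadj, p', hLp', ?_⟩
    have : c ∈ q.support := by
      rw [← List.mem_reverse, ← Walk.support_reverse, hsup]
      simp [Walk.start_mem_support]
    exact Walk.support_takeUntil_subset P hLP this
  obtain ⟨cu, hadju, pu', hpu', hcuPu⟩ := extract Bu Pu hBuL hLPu
  obtain ⟨cv, hadjv, pv', hpv', hcvPv⟩ := extract Bv Pv hBvL hLPv
  -- cu = cv
  have hcueq : cu = cv := by
    by_contra hne
    -- walk cu → cv avoiding L
    have hW : L ∉ (pu'.append (w.append pv'.reverse)).support := by
      rw [Walk.mem_support_append_iff, Walk.mem_support_append_iff,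
        Walk.support_reverse, List.mem_reverse]
      rintro (h | h | h) <;> [exact hpu' h; exact hw h; exact hpv' h]
    obtain ⟨Q, hLQ⟩ : ∃ Q : T.Path cu cv, L ∉ (Q : T.Walk cu cv).support :=
      ⟨(pu'.append (w.append pv'.reverse)).toPath,
        fun h => hW (Walk.support_toPath_subset _ h)⟩
    -- path cu → L
    have hW3 : (Walk.concat (Q : T.Walk cu cv) hadjv.symm).IsPath := by
      rw [← Walk.isPath_reverse_iff, Walk.reverse_concat]
      rw [Walk.cons_isPath_iff]
      exact ⟨Q.2.reverse, by rwa [Walk.support_reverse, List.mem_reverse]⟩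
    have hedge : s(L, cu) ∉ (Walk.concat (Q : T.Walk cu cv) hadjv.symm).edges := by
      rw [Walk.edges_concat]
      intro h
      rw [List.concat_eq_append] at h
      rcases List.mem_append.mp h with h | h
      · exact hLQ (Walk.fst_mem_support_of_mem_edges _ h)
      · simp only [List.mem_singleton, Sym2.eq_iff] at h
        rcases h with ⟨h1, h2⟩ | ⟨h1, h2⟩
        · exact hadjv.ne h1
        · exact hne h2
    exact hT.2 (Walk.cons hadju (Walk.concat (Q : T.Walk cu cv) hadjv.symm))
      (Path.cons_isCycle ⟨_, hW3⟩ hadju hedge)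
  subst hcueq
  -- cu is a common ancestor
  have hancu : IsAncestor T r cu Bu := ancestor_of_mem_path hT hPu hcuPu
  have hancv : IsAncestor T r cu Bv := ancestor_of_mem_path hT hPv hcvPv
  have hle : T.dist cu r ≤ T.dist L r := hLMax cu hancu hancv
  -- but cu is strictly deeper than L
  obtain ⟨p, hp⟩ := hT.1.exists_walk_length_eq_dist cu r
  have hLp : L ∈ p.support := by
    by_contra hLp
    have := hLu (pu'.reverse.append p)
    rw [Walk.mem_support_append_iff, Walk.support_reverse, List.mem_reverse] at this
    rcases this with h | h <;> [exact hpu' h; exact hLp h]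
  have hsplit := congrArg Walk.length (p.take_spec hLp)
  rw [Walk.length_append] at hsplit
  have h1 : T.dist L r ≤ (p.dropUntil L hLp).length := dist_le _
  have h2 : 1 ≤ (p.takeUntil L hLp).length := by
    rcases Nat.eq_zero_or_pos (p.takeUntil L hLp).length with h | h
    · exact absurd (Walk.eq_of_length_eq_zero h) hadju.ne'
    · exact h
  omega
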